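/- Let T be a triangulated category. Let (A, B, C, ∂, p, q) and (A, B₁, C₁, ∂₁, p₁, q₁) be distinguished triangles on the same first object A, and let (𝟙_A, f, g) be a morphism of distinguished triangles from the first triangle to the second. Suppose θ : B₁ → B is a morphism satisfying θ ∘ f = 𝟙_B and θ ∘ ∂₁ = ∂, and suppose Hom_T(A, C₁⟦-1⟧) = 0. Then there exists a unique morphism η : C₁ → C such that (𝟙_A, θ, η) is a morphism of distinguished triangles; this η satisfies η ∘ g = 𝟙_C, and there is an isomorphism B₁ ⊕ C ≅ B ⊕ C₁. (The triangulated core of the implication (i) ⟹ (ii) of Theorem 1.1 of the paper.) -/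

import Mathlib

open CategoryTheory CategoryTheory.Limits CategoryTheory.Pretriangulated

/-- The triangulated core of the implication (i) ⟹ (ii) of Theorem 1.1: given two
distinguished triangles on the same first object `A`, a morphism of triangles `(𝟙 A, f, g)`
from the first to the second, and `θ : B₁ ⟶ B` with `θ ∘ f = 𝟙 B` and `θ ∘ ∂₁ = ∂`,
and `Hom(A, C₁⟦-1⟧) = 0`, then there is a unique `η : C₁ ⟶ C` making `(𝟙 A, θ, η)` a
morphism of triangles; any such `η` satisfies `η ∘ g = 𝟙 C`, and `B₁ ⊞ C ≅ B ⊞ C₁`. -/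
theorem degree_one_gives_cross_isomorphism
    (T : Type*) [Category T] [Preadditive T] [HasZeroObject T] [HasBinaryBiproducts T]
    [HasShift T ℤ] [∀ n : ℤ, (shiftFunctor T n).Additive] [Pretriangulated T]
    [IsTriangulated T]
    (A B C B₁ C₁ : T)
    (d : A ⟶ B) (p : B ⟶ C) (q : C ⟶ A⟦(1:ℤ)⟧)
    (d₁ : A ⟶ B₁) (p₁ : B₁ ⟶ C₁) (q₁ : C₁ ⟶ A⟦(1:ℤ)⟧)
    (hT : Triangle.mk d p q ∈ distTriang T)
    (hT₁ : Triangle.mk d₁ p₁ q₁ ∈ distTriang T)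
    -- the morphism of triangles (𝟙 A, f, g) from (A,B,C) to (A,B₁,C₁)
    (f : B ⟶ B₁) (g : C ⟶ C₁)
    (hf₁ : d ≫ f = 𝟙 A ≫ d₁) (hg₁ : p ≫ g = f ≫ p₁)
    (hq₁ : q ≫ (𝟙 A)⟦(1:ℤ)⟧' = g ≫ q₁)
    (θ : B₁ ⟶ B)
    (hθf : f ≫ θ = 𝟙 B) (hθd : d₁ ≫ θ = d)
    (hzero : ∀ φ : A ⟶ C₁⟦(-1:ℤ)⟧, φ = 0) :
    (∃! η : C₁ ⟶ C, p₁ ≫ η = θ ≫ p ∧ q₁ ≫ (𝟙 A)⟦(1:ℤ)⟧' = η ≫ q) ∧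
    (∀ η : C₁ ⟶ C, (p₁ ≫ η = θ ≫ p ∧ q₁ ≫ (𝟙 A)⟦(1:ℤ)⟧' = η ≫ q) → g ≫ η = 𝟙 C) ∧
    Nonempty (B₁ ⊞ C ≅ B ⊞ C₁) := by
  have shift_id : (𝟙 A)⟦(1:ℤ)⟧' = 𝟙 (A⟦(1:ℤ)⟧) := (shiftFunctor T (1:ℤ)).map_id A
  rw [shift_id, Category.comp_id] at hq₁   -- hq₁ : q = g ≫ q₁
  have hdf : d ≫ f = d₁ := by rw [hf₁, Category.id_comp]
  have hdp : d ≫ p = 0 := comp_distTriang_mor_zero₁₂ _ hT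
  have hdp₁ : d₁ ≫ p₁ = 0 := comp_distTriang_mor_zero₁₂ _ hT₁
  -- Hom(A⟦1⟧, C₁) = 0
  have hz1 : ∀ ψ : A⟦(1:ℤ)⟧ ⟶ C₁, ψ = 0 := by
    intro ψ
    have h := hzero ((shiftFunctorCompIsoId T (1:ℤ) (-1:ℤ) (by norm_num)).inv.app A
      ≫ ψ⟦(-1:ℤ)⟧')
    have h' : ψ⟦(-1:ℤ)⟧' = 0 := by
      rw [← cancel_epi ((shiftFunctorCompIsoId T (1:ℤ) (-1:ℤ) (by norm_num)).inv.app A),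
        comp_zero]
      exact h
    apply (shiftFunctor T (-1:ℤ)).map_injective
    rw [h', Functor.map_zero]
  -- Hom(A⟦1⟧, C) = 0
  have hzC : ∀ ψ : A⟦(1:ℤ)⟧ ⟶ C, ψ = 0 := by
    intro ψ
    have hψg : ψ ≫ g = 0 := hz1 _
    have hψq : ψ ≫ q = 0 := by rw [hq₁, ← Category.assoc, hψg, zero_comp]
    obtain ⟨χ, hχ⟩ : ∃ χ : A⟦(1:ℤ)⟧ ⟶ B, ψ = χ ≫ p :=
      Triangle.coyoneda_exact₃ _ hT ψ hψq   -- ψ = χ ≫ p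
    have h2 : (χ ≫ f) ≫ p₁ = 0 := by
      rw [Category.assoc, ← hg₁, ← Category.assoc, ← hχ, hψg]
    obtain ⟨k, hk⟩ : ∃ k : A⟦(1:ℤ)⟧ ⟶ A, χ ≫ f = k ≫ d₁ :=
      Triangle.coyoneda_exact₂ _ hT₁ (χ ≫ f) h2   -- χ ≫ f = k ≫ d₁
    have hχ' : χ = k ≫ d := by
      have h3 := congrArg (· ≫ θ) hk
      simp only [Category.assoc, hθf, Category.comp_id, hθd] at h3
      exact h3
    rw [hχ, hχ', Category.assoc, hdp, comp_zero]
  -- any two fill-ins agree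
  have huniq : ∀ η η' : C₁ ⟶ C, p₁ ≫ η = θ ≫ p → p₁ ≫ η' = θ ≫ p → η = η' := by
    intro η η' h h'
    have h0 : p₁ ≫ (η - η') = 0 := by rw [Preadditive.comp_sub, h, h', sub_self]
    obtain ⟨ψ, hψ⟩ : ∃ ψ : A⟦(1:ℤ)⟧ ⟶ C, η - η' = q₁ ≫ ψ :=
      Triangle.yoneda_exact₃ _ hT₁ (η - η') h0
    rw [hzC ψ, comp_zero] at hψ
    exact sub_eq_zero.mp hψ
  -- existence
  obtain ⟨η₀, hη₀₁, hη₀₂⟩ : ∃ η₀ : C₁ ⟶ C, p₁ ≫ η₀ = θ ≫ p ∧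
      q₁ ≫ (𝟙 A)⟦(1:ℤ)⟧' = η₀ ≫ q := complete_distinguished_triangle_morphism
    (Triangle.mk d₁ p₁ q₁) (Triangle.mk d p q) hT₁ hT (𝟙 A) θ
    (by change d₁ ≫ θ = 𝟙 A ≫ d; rw [hθd, Category.id_comp])
  have hη₀q : η₀ ≫ q = q₁ := by rw [← hη₀₂, shift_id, Category.comp_id]
  -- second claim
  have hsecond : ∀ η : C₁ ⟶ C,
      (p₁ ≫ η = θ ≫ p ∧ q₁ ≫ (𝟙 A)⟦(1:ℤ)⟧' = η ≫ q) → g ≫ η = 𝟙 C := by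
    rintro η ⟨h1, -⟩
    have hp : p ≫ (g ≫ η - 𝟙 C) = 0 := by
      rw [Preadditive.comp_sub, Category.comp_id, ← Category.assoc, hg₁, Category.assoc, h1,
        ← Category.assoc, hθf, Category.id_comp, sub_self]
    obtain ⟨ψ, hψ⟩ : ∃ ψ : A⟦(1:ℤ)⟧ ⟶ C, g ≫ η - 𝟙 C = q ≫ ψ :=
      Triangle.yoneda_exact₃ _ hT (g ≫ η - 𝟙 C) hp
    rw [hzC ψ, comp_zero] at hψ
    exact sub_eq_zero.mp hψ
  have hgη₀ : g ≫ η₀ = 𝟙 C := hsecond η₀ ⟨hη₀₁, hη₀₂⟩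
  refine ⟨⟨η₀, ⟨hη₀₁, hη₀₂⟩, fun η hη => huniq η η₀ hη.1 hη₀₁⟩, hsecond, ?_⟩
  -- the cross isomorphism
  have hy0 : (𝟙 C₁ - η₀ ≫ g) ≫ q₁ = 0 := by
    rw [Preadditive.sub_comp, Category.id_comp, Category.assoc, ← hq₁, hη₀q, sub_self]
  obtain ⟨y, hy⟩ : ∃ y : C₁ ⟶ B₁, 𝟙 C₁ - η₀ ≫ g = y ≫ p₁ :=
    Triangle.coyoneda_exact₃ _ hT₁ (𝟙 C₁ - η₀ ≫ g) hy0
  have hyp₁ : y ≫ p₁ = 𝟙 C₁ - η₀ ≫ g := hy.symm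
  set n : B₁ ⟶ B₁ := θ ≫ f + p₁ ≫ y - 𝟙 B₁ with hn
  have he : θ ≫ f + p₁ ≫ y = 𝟙 B₁ + n := by rw [hn]; abel
  have hnp₁ : n ≫ p₁ = 0 := by
    rw [hn, Preadditive.sub_comp, Preadditive.add_comp, Category.assoc, Category.assoc,
      hyp₁, Preadditive.comp_sub, Category.comp_id, ← Category.assoc p₁ η₀, hη₀₁, ← hg₁,
      ← Category.assoc θ p g, Category.id_comp]
    abel
  obtain ⟨k, hk⟩ : ∃ k : B₁ ⟶ A, n = k ≫ d₁ :=
    Triangle.coyoneda_exact₂ _ hT₁ n hnp₁   -- n = k ≫ d₁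
  have hd₁n : d₁ ≫ n = 0 := by
    rw [hn, Preadditive.comp_sub, Preadditive.comp_add, Category.comp_id,
      ← Category.assoc, hθd, hdf, ← Category.assoc, hdp₁, zero_comp]
    abel
  have hnn : n ≫ n = 0 := by
    nth_rewrite 1 [hk]
    rw [Category.assoc, hd₁n, comp_zero]
  let φ : B₁ ⊞ C ⟶ B ⊞ C₁ := biprod.desc (biprod.lift θ p₁) (biprod.lift 0 g)
  let ρ : B ⊞ C₁ ⟶ B₁ ⊞ C := biprod.desc (biprod.lift f (-p)) (biprod.lift y η₀)
  let σ : B ⊞ C₁ ⟶ B₁ ⊞ C :=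
    (𝟙 (B ⊞ C₁) - biprod.snd ≫ (y ≫ θ) ≫ biprod.inl) ≫ ρ
  let τ : B ⊞ C₁ ⟶ B₁ ⊞ C :=
    ρ ≫ (𝟙 (B₁ ⊞ C) - biprod.fst ≫ n ≫ biprod.inl
      - biprod.snd ≫ (g ≫ y ≫ (𝟙 B₁ - n)) ≫ biprod.inl)
  have hσφ : σ ≫ φ = 𝟙 (B ⊞ C₁) := by
    apply biprod.hom_ext' <;> apply biprod.hom_ext <;>
      simp only [σ, ρ, φ] <;>
      simp [Preadditive.sub_comp, Preadditive.comp_sub]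
    · exact hθf
    · rw [hg₁]; abel
    · simp [hθf]
    · rw [← hg₁, hyp₁]
      abel
  have hφτ : φ ≫ τ = 𝟙 (B₁ ⊞ C) := by
    rw [show φ ≫ τ = (φ ≫ ρ) ≫ (𝟙 (B₁ ⊞ C) - biprod.fst ≫ n ≫ biprod.inl
      - biprod.snd ≫ (g ≫ y ≫ (𝟙 B₁ - n)) ≫ biprod.inl) by simp [τ, Category.assoc]]
    apply biprod.hom_ext' <;> apply biprod.hom_ext <;>
      simp only [ρ, φ] <;>
      simp [Preadditive.sub_comp, Preadditive.comp_sub]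
    · simp only [← Category.assoc]
      rw [hη₀₁]
      rw [show ((θ ≫ f) ≫ n + (p₁ ≫ y) ≫ n : B₁ ⟶ B₁)
          = (θ ≫ f + p₁ ≫ y) ≫ n by rw [Preadditive.add_comp],
        he, Preadditive.add_comp, Category.id_comp, hnn, add_zero]
      abel
    · rw [hη₀₁]; abel
    · simp only [← Category.assoc]
      rw [hgη₀, Category.id_comp]
      abel
    · exact hgη₀
  have hστ : σ = τ := by
    calc σ = σ ≫ (φ ≫ τ) := by rw [hφτ, Category.comp_id]
    _ = (σ ≫ φ) ≫ τ := by simp only [Category.assoc]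
    _ = τ := by rw [hσφ, Category.id_comp]
  exact ⟨⟨φ, τ, hφτ, by rw [← hστ]; exact hσφ⟩⟩
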